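/- For n ≥ 1, every Dyck n-path with terminal descent of even length (≥ 2) and k ≥ 1 even-length descents to ground level decomposes uniquely, by cutting at its even-length descents to ground level, into a concatenation of k nonempty Dyck paths each having terminal descent of even length and all other descents to ground level of odd length. -/

import Mathlib

inductive Step : Type
  | U : Step
  | D : Step
deriving DecidableEq

open Step

/-- The path stays weakly above ground level: every prefix has at least as many `U`s as `D`s. -/
def NonnegPrefixes (p : List Step) : Prop :=
  ∀ q : List Step, q <+: p → q.count D ≤ q.count U

/-- A Dyck path: equally many upsteps and downsteps, never dipping below ground level. -/
def IsDyck (p : List Step) : Prop :=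
  p.count U = p.count D ∧ NonnegPrefixes p

/-- A Dyck `n`-path: a Dyck path with `n` upsteps (semilength `n`). -/
def IsDyckN (n : ℕ) (p : List Step) : Prop :=
  IsDyck p ∧ p.count U = n

/-- Length of the terminal descent (maximal final run of downsteps). -/
def termDesc (p : List Step) : ℕ :=
  (p.reverse.takeWhile (fun s => s == D)).length

/-- Number of returns: downsteps that bring the path back to ground level. -/
def returnCount (p : List Step) : ℕ :=
  ((List.range p.length).filter
    (fun i => (p.take (i+1)).count U == (p.take (i+1)).count D)).length

/-- `GroundDescent p q m r` : `p = q ++ D^m ++ r` is a maximal run of `m ≥ 1` downsteps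
ending at ground level. -/
def GroundDescent (p q : List Step) (m : ℕ) (r : List Step) : Prop :=
  p = q ++ List.replicate m D ++ r ∧ 1 ≤ m ∧
  q.getLast? ≠ some D ∧ r.head? ≠ some D ∧
  q.count U = q.count D + m

/-- All descents to ground level other than the terminal one have odd length. -/
def OddNonterminalGroundDescents (p : List Step) : Prop :=
  ∀ q m r, GroundDescent p q m r → r ≠ [] → Odd m

/-- No occurrence of `UD` starting at ground level. -/
def HillFree (p : List Step) : Prop :=
  ∀ q r : List Step, p = q ++ [U, D] ++ r → q.count U ≠ q.count D

/-- No occurrence of `UDU` starting at ground level. -/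
def EarlyHillFree (p : List Step) : Prop :=
  ∀ q r : List Step, p = q ++ [U, D, U] ++ r → q.count U ≠ q.count D

/-- Number of early hills: occurrences of `UDU` starting at ground level. -/
def earlyHillCount (p : List Step) : ℕ :=
  ((List.range p.length).filter
    (fun i => decide ((p.take i).count U = (p.take i).count D ∧
      (p.drop i).take 3 = [U, D, U]))).length

/-- Number of even-length descents to ground level of `p`. -/
noncomputable def evenGroundDescentCount (p : List Step) : ℕ :=
  Nat.card {x : List Step × ℕ × List Step //
    GroundDescent p x.1 x.2.1 x.2.2 ∧ Even x.2.1}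

lemma count_UD_len (l : List Step) : l.count U + l.count D = l.length := by
  induction l with
  | nil => rfl
  | cons s t ih => cases s <;> simp [List.count_cons] <;> omega

lemma dyck_last {p : List Step} (h : IsDyck p) (hne : p ≠ []) : p.getLast? = some D := by
  obtain ⟨t, b, rfl⟩ := (List.eq_nil_or_concat p).resolve_left hne
  rw [List.concat_eq_append, List.getLast?_concat]
  cases b with
  | D => rfl
  | U =>
    exfalso
    have h1 := h.2 t ⟨[U], by simp⟩
    have h2 := h.1
    simp [List.count_append, List.count_cons] at h2
    omega

lemma dyck_head {p : List Step} (h : IsDyck p) (hne : p ≠ []) : p.head? = some U := by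
  cases p with
  | nil => simp at hne
  | cons d t =>
    cases d with
    | U => rfl
    | D =>
      exfalso
      have := h.2 [D] ⟨t, rfl⟩
      simp [List.count_cons] at this

lemma mem_U_of_dyck_ne {p : List Step} (h : IsDyck p) (hne : p ≠ []) : U ∈ p := by
  rw [← List.count_pos_iff]
  have h1 := count_UD_len p
  have h2 := h.1
  have h3 : p.length ≠ 0 := by simpa using hne
  omega

lemma rep_append_det {m m' : ℕ} {r r' : List Step}
    (h : List.replicate m D ++ r = List.replicate m' D ++ r')
    (hr : r.head? ≠ some D) (hr' : r'.head? ≠ some D) : m = m' ∧ r = r' := by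
  have key : ∀ {a a' : ℕ} {s s' : List Step}, a ≤ a' →
      List.replicate a D ++ s = List.replicate a' D ++ s' →
      s.head? ≠ some D → a = a' ∧ s = s' := by
    intro a a' s s' hle heq hs
    have hrep : List.replicate a' D = List.replicate a D ++ List.replicate (a' - a) D := by
      rw [← List.replicate_add]; congr 1; omega
    rw [hrep, List.append_assoc] at heq
    have h2 : s = List.replicate (a' - a) D ++ s' := List.append_cancel_left heq
    rcases Nat.eq_zero_or_pos (a' - a) with h0 | h0
    · constructor
      · omega
      · rw [h2, h0]; simp
    · exfalso
      apply hs
      rw [h2, List.head?_append_of_ne_nil]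
      · obtain ⟨j, hh⟩ : ∃ j, a' - a = j + 1 := ⟨a' - a - 1, by omega⟩
        rw [hh, List.replicate_succ]; rfl
      · simp; omega
  rcases le_total m m' with hle | hle
  · exact key hle h hr
  · obtain ⟨h1, h2⟩ := key hle h.symm hr'
    exact ⟨h1.symm, h2.symm⟩

lemma gd_det {p q m r q' m' r'} (h : GroundDescent p q m r) (h' : GroundDescent p q' m' r')
    (hl : q.length = q'.length) : q = q' ∧ m = m' ∧ r = r' := by
  obtain ⟨hp, _, _, hr, _⟩ := h
  obtain ⟨hp', _, _, hr', _⟩ := h'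
  have h1 : q <+: p := ⟨_, by rw [hp, List.append_assoc]⟩
  have h2 : q' <+: p := ⟨_, by rw [hp', List.append_assoc]⟩
  rw [List.prefix_iff_eq_take] at h1 h2
  have hq : q = q' := by rw [h1, h2, hl]
  subst hq
  rw [hp, List.append_assoc] at hp'
  rw [List.append_assoc] at hp'
  have heq := List.append_cancel_left hp'
  obtain ⟨hm, hrr⟩ := rep_append_det heq hr hr'
  exact ⟨rfl, hm, hrr⟩

lemma gd_len {p q : List Step} {m : ℕ} {r : List Step} (h : GroundDescent p q m r) :
    q.length < p.length + 1 := by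
  have := h.1
  have : p.length = q.length + m + r.length := by rw [this]; simp; omega
  omega

instance gd_finite (p : List Step) :
    Finite {x : List Step × ℕ × List Step //
      GroundDescent p x.1 x.2.1 x.2.2 ∧ Even x.2.1} := by
  apply Finite.of_injective
    (fun x => (⟨x.1.1.length, gd_len x.2.1⟩ : Fin (p.length + 1)))
  rintro ⟨⟨q, m, r⟩, hx⟩ ⟨⟨q', m', r'⟩, hy⟩ h
  simp only [Fin.mk.injEq] at h
  obtain ⟨h1, h2, h3⟩ := gd_det hx.1 hy.1 h
  apply Subtype.ext
  simp only [Prod.mk.injEq]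
  exact ⟨h1, h2, h3⟩

lemma termDesc_spec {p : List Step} (h : IsDyck p) (hne : p ≠ []) :
    GroundDescent p ((p.reverse.dropWhile (fun s => s == D)).reverse) (termDesc p) [] := by
  set t := p.reverse.takeWhile (fun s => s == D) with ht
  set s := p.reverse.dropWhile (fun s => s == D) with hs
  have hts : t ++ s = p.reverse := List.takeWhile_append_dropWhile
  have htrep : t = List.replicate t.length D := by
    apply List.eq_replicate_of_mem
    intro b hb
    have := List.mem_takeWhile_imp hb
    simpa using this
  have hp : p = s.reverse ++ List.replicate t.length D := by
    conv_lhs => rw [← List.reverse_reverse p, ← hts]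
    rw [List.reverse_append]
    congr 1
    nth_rewrite 1 [htrep]
    rw [List.reverse_replicate]
  have hm1 : 1 ≤ t.length := by
    have hlast : p.reverse.head? = some D := by
      rw [List.head?_reverse]
      exact dyck_last h hne
    cases hrev : p.reverse with
    | nil => rw [hrev] at hlast; simp at hlast
    | cons c tl =>
      rw [hrev] at hlast
      have hc : c = D := by simpa using hlast
      rw [ht, hrev, hc]
      simp [List.takeWhile_cons]
  have hqlast : s.reverse.getLast? ≠ some D := by
    rw [List.getLast?_reverse]
    have this := List.head?_dropWhile_not (fun s => s == D) p.reverse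
    rw [← hs] at this
    intro hcon
    rw [hcon] at this
    simp at this
  have hcount : s.reverse.count U = s.reverse.count D + t.length := by
    have hb := h.1
    rw [hp] at hb
    simp [List.count_append, List.count_replicate, List.count_reverse] at hb
    simp only [List.count_reverse]
    omega
  refine ⟨?_, ?_, hqlast, by simp, hcount⟩
  · rw [List.append_nil]
    have : termDesc p = t.length := rfl
    rw [this, ← hp]
  · have : termDesc p = t.length := rfl
    rw [this]; exact hm1
lemma termDesc_of_gd_nil {p q : List Step} {m : ℕ} (h : GroundDescent p q m []) :
    termDesc p = m := by
  obtain ⟨hp, hm, hq, -, -⟩ := h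
  rw [List.append_nil] at hp
  have hrev : p.reverse = List.replicate m D ++ q.reverse := by
    rw [hp, List.reverse_append, List.reverse_replicate]
  unfold termDesc
  rw [hrev, List.takeWhile_append]
  have htw : List.takeWhile (fun s => s == D) (List.replicate m D) = List.replicate m D := by
    rw [List.takeWhile_eq_self_iff.mpr]
    intro a ha
    have := List.eq_of_mem_replicate ha
    simp [this]
  have htq : List.takeWhile (fun s => s == D) q.reverse = [] := by
    cases hq2 : q.reverse with
    | nil => simp
    | cons c tl =>
      have hc : c ≠ D := by
        intro hc
        apply hq
        rw [← List.head?_reverse, hq2, hc]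
        rfl
      rw [List.takeWhile_cons, if_neg (by simpa using hc)]
  rw [htw, htq]
  simp

lemma termDesc_append {a b : List Step} (hb : U ∈ b) : termDesc (a ++ b) = termDesc b := by
  unfold termDesc
  rw [List.reverse_append, List.takeWhile_append, if_neg]
  intro hlen
  have heq : List.takeWhile (fun s => s == D) b.reverse = b.reverse :=
    (List.takeWhile_prefix _).eq_of_length hlen
  have hmem : U ∈ b.reverse := by simpa using hb
  rw [← heq] at hmem
  have := List.mem_takeWhile_imp hmem
  simp at this

lemma gd_dyck_parts {p q : List Step} {m : ℕ} {r : List Step}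
    (hp : IsDyck p) (h : GroundDescent p q m r) :
    IsDyck (q ++ List.replicate m D) ∧ IsDyck r := by
  obtain ⟨hpe, hm, hq, hr, hc⟩ := h
  constructor
  · constructor
    · simp [List.count_append, List.count_replicate]
      omega
    · intro t ht
      apply hp.2
      exact ht.trans ⟨r, by rw [hpe]⟩
  · constructor
    · have := hp.1
      rw [hpe] at this
      simp [List.count_append, List.count_replicate] at this
      omega
    · intro t ht
      obtain ⟨u, hu⟩ := ht
      have h2 := hp.2 ((q ++ List.replicate m D) ++ t)
        ⟨u, by rw [hpe, ← hu]; simp [List.append_assoc]⟩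
      simp [List.count_append, List.count_replicate] at h2
      omega
lemma gd_split {a b q : List Step} {m : ℕ} {r : List Step}
    (ha : a.count U = a.count D) (hlast : a.getLast? = some D) (hhead : b.head? = some U) :
    GroundDescent (a ++ b) q m r ↔
      (∃ r', r = r' ++ b ∧ GroundDescent a q m r') ∨
      (∃ q', q = a ++ q' ∧ GroundDescent b q' m r) := by
  constructor
  · rintro ⟨hp, hm, hqn, hrn, hcount⟩
    rw [List.append_assoc] at hp
    rcases List.append_eq_append_iff.mp hp.symm with ⟨c, hac, hcb⟩ | ⟨c, hqc, hbc⟩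
    · -- a = q ++ c, rep ++ r = c ++ b
      rcases List.append_eq_append_iff.mp hcb with ⟨x, hcx, hrx⟩ | ⟨y, hry, hby⟩
      · -- c = rep ++ x, r = x ++ b
        refine Or.inl ⟨x, hrx, ?_, hm, hqn, ?_, hcount⟩
        · rw [hac, hcx, List.append_assoc]
        · cases x with
          | nil => simp
          | cons d x' =>
            rw [hrx] at hrn
            simpa using hrn
      · -- rep = c ++ y, b = y ++ r
        cases y with
        | nil =>
          rw [List.append_nil] at hry
          rw [List.nil_append] at hby
          refine Or.inl ⟨[], by simp [hby], ?_, hm, hqn, by simp, hcount⟩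
          rw [hac, hry, List.append_nil]
        | cons d y' =>
          exfalso
          have hd : d = D := by
            have : d ∈ List.replicate m D := by rw [hry]; simp
            exact List.eq_of_mem_replicate this
          rw [hby, hd] at hhead
          simp at hhead
    · -- q = a ++ c, b = c ++ (rep ++ r)
      have hcne : c ≠ [] := by
        rintro rfl
        rw [List.append_nil] at hqc
        rw [hqc] at hqn
        exact hqn hlast
      refine Or.inr ⟨c, hqc, by rw [hbc, List.append_assoc], hm, ?_, hrn, ?_⟩
      · rw [hqc, List.getLast?_append_of_ne_nil _ hcne] at hqn
        exact hqn
      · rw [hqc] at hcount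
        simp [List.count_append] at hcount
        omega
  · rintro (⟨r', hrr, hga⟩ | ⟨q', hqq, hgb⟩)
    · obtain ⟨hae, hm, hqn, hrn, hcount⟩ := hga
      refine ⟨?_, hm, hqn, ?_, hcount⟩
      · rw [hae, hrr]
        simp [List.append_assoc]
      · rw [hrr]
        cases r' with
        | nil =>
          rw [List.nil_append, hhead]
          simp
        | cons d r'' =>
          rw [List.head?_append_of_ne_nil _ (by simp)]
          exact hrn
    · obtain ⟨hbe, hm, hqn, hrn, hcount⟩ := hgb
      have hq'ne : q' ≠ [] := by
        rintro rfl
        simp at hcount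
        omega
      refine ⟨?_, hm, ?_, hrn, ?_⟩
      · rw [hbe, hqq]
        simp [List.append_assoc]
      · rw [hqq, List.getLast?_append_of_ne_nil _ hq'ne]
        exact hqn
      · rw [hqq]
        simp [List.count_append]
        omega
def gdSum (a b : List Step) (ha : a.count U = a.count D) (hlast : a.getLast? = some D)
    (hhead : b.head? = some U) :
    ({x : List Step × ℕ × List Step // GroundDescent a x.1 x.2.1 x.2.2 ∧ Even x.2.1} ⊕
     {x : List Step × ℕ × List Step // GroundDescent b x.1 x.2.1 x.2.2 ∧ Even x.2.1}) →
    {x : List Step × ℕ × List Step // GroundDescent (a ++ b) x.1 x.2.1 x.2.2 ∧ Even x.2.1}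
  | Sum.inl x => ⟨(x.1.1, x.1.2.1, x.1.2.2 ++ b), by
      rw [gd_split ha hlast hhead]
      exact Or.inl ⟨x.1.2.2, rfl, x.2.1⟩, x.2.2⟩
  | Sum.inr y => ⟨(a ++ y.1.1, y.1.2.1, y.1.2.2), by
      rw [gd_split ha hlast hhead]
      exact Or.inr ⟨y.1.1, rfl, y.2.1⟩, y.2.2⟩

lemma egdc_append {a b : List Step} (ha : a.count U = a.count D)
    (hlast : a.getLast? = some D) (hhead : b.head? = some U) :
    evenGroundDescentCount (a ++ b) = evenGroundDescentCount a + evenGroundDescentCount b := by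
  classical
  rw [evenGroundDescentCount, evenGroundDescentCount, evenGroundDescentCount, ← Nat.card_sum]
  refine (Nat.card_eq_of_bijective (gdSum a b ha hlast hhead) ⟨?_, ?_⟩).symm
  · rintro (⟨⟨q, m, r'⟩, h⟩ | ⟨⟨q', m, r⟩, h⟩) (⟨⟨q2, m2, r2⟩, h2⟩ | ⟨⟨q2, m2, r2⟩, h2⟩) heq <;>
      simp only [gdSum, Subtype.mk.injEq, Prod.mk.injEq] at heq
    · obtain ⟨e1, e2, e3⟩ := heq
      have e3' : r' = r2 := List.append_cancel_right e3
      subst e1; subst e2; subst e3'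
      rfl
    · exfalso
      obtain ⟨e1, e2, e3⟩ := heq
      have hga : a = q ++ List.replicate m D ++ r' := h.1.1
      have hm : 1 ≤ m := h.1.2.1
      have l1 : a.length = q.length + m + r'.length := by rw [hga]; simp; omega
      have l2 : q.length = a.length + q2.length := by rw [e1]; simp
      omega
    · exfalso
      obtain ⟨e1, e2, e3⟩ := heq
      have hga : a = q2 ++ List.replicate m2 D ++ r2 := h2.1.1
      have hm : 1 ≤ m2 := h2.1.2.1
      have l1 : a.length = q2.length + m2 + r2.length := by rw [hga]; simp; omega
      have l2 : q2.length = a.length + q'.length := by rw [← e1]; simp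
      omega
    · obtain ⟨e1, e2, e3⟩ := heq
      have e1' : q' = q2 := List.append_cancel_left e1
      subst e1'; subst e2; subst e3
      rfl
  · rintro ⟨⟨q, m, r⟩, hg, hev⟩
    rcases (gd_split ha hlast hhead).mp hg with ⟨r', hrr, hga⟩ | ⟨q', hqq, hgb⟩
    · refine ⟨Sum.inl ⟨(q, m, r'), hga, hev⟩, ?_⟩
      apply Subtype.ext
      simp [gdSum]
      exact hrr.symm
    · refine ⟨Sum.inr ⟨(q', m, r), hgb, hev⟩, ?_⟩
      apply Subtype.ext
      simp [gdSum]
      exact hqq.symm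

lemma egdc_good {p : List Step} (h : IsDyck p) (hne : p ≠ [])
    (hodd : OddNonterminalGroundDescents p) (hev : Even (termDesc p)) :
    evenGroundDescentCount p = 1 := by
  rw [evenGroundDescentCount, Nat.card_eq_one_iff_unique]
  constructor
  · constructor
    rintro ⟨⟨q, m, r⟩, hg, hevm⟩ ⟨⟨q', m', r'⟩, hg', hevm'⟩
    have hr : r = [] := by
      by_contra hr
      exact (Nat.not_odd_iff_even.mpr hevm) (hodd _ _ _ hg hr)
    have hr' : r' = [] := by
      by_contra hr'
      exact (Nat.not_odd_iff_even.mpr hevm') (hodd _ _ _ hg' hr')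
    subst hr; subst hr'
    have hm : m = termDesc p := (termDesc_of_gd_nil hg).symm
    have hm' : m' = termDesc p := (termDesc_of_gd_nil hg').symm
    have hlen : q.length = q'.length := by
      have l1 : p.length = q.length + m := by rw [hg.1]; simp
      have l2 : p.length = q'.length + m' := by rw [hg'.1]; simp
      omega
    obtain ⟨e1, e2, e3⟩ := gd_det hg hg' hlen
    apply Subtype.ext
    simp only [Prod.mk.injEq]
    exact ⟨e1, e2, trivial⟩
  · exact ⟨⟨(_, termDesc p, []), termDesc_spec h hne, hev⟩⟩
lemma exists_decomp : ∀ (n : ℕ) (p : List Step), p.length = n → IsDyck p → p ≠ [] →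
    Even (termDesc p) →
    ∃ L : List (List Step), L.length = evenGroundDescentCount p ∧
      (∀ P ∈ L, IsDyck P ∧ P ≠ [] ∧ Even (termDesc P) ∧ OddNonterminalGroundDescents P) ∧
      p = L.flatten := by
  intro n
  induction n using Nat.strong_induction_on with
  | _ n ih =>
    rintro p rfl hp hne hev
    by_cases hodd : OddNonterminalGroundDescents p
    · refine ⟨[p], ?_, ?_, by simp⟩
      · rw [egdc_good hp hne hodd hev]; rfl
      · intro P hP
        simp at hP
        subst hP
        exact ⟨hp, hne, hev, hodd⟩
    · obtain ⟨q, m, r, hg, hr, hm⟩ : ∃ q m r, GroundDescent p q m r ∧ r ≠ [] ∧ ¬ Odd m := by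
        unfold OddNonterminalGroundDescents at hodd
        push_neg at hodd
        obtain ⟨q, m, r, h1, h2, h3⟩ := hodd
        exact ⟨q, m, r, h1, h2, h3⟩
      have hevm : Even m := Nat.not_odd_iff_even.mp hm
      set a := q ++ List.replicate m D with hadef
      have hpa : p = a ++ r := by rw [hg.1, hadef]
      obtain ⟨hda, hdr⟩ := gd_dyck_parts hp hg
      have hm1 : 1 ≤ m := hg.2.1
      have hane : a ≠ [] := by
        intro h0
        have := congrArg List.length h0
        simp [hadef] at this
        omega
      have hga : GroundDescent a q m [] :=
        ⟨by simp [hadef], hg.2.1, hg.2.2.1, by simp, hg.2.2.2.2⟩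
      have hta : termDesc a = m := termDesc_of_gd_nil hga
      have hUr : U ∈ r := mem_U_of_dyck_ne hdr hr
      have htr : termDesc r = termDesc p := by rw [hpa, termDesc_append hUr]
      have hla : a.length < p.length := by
        rw [hpa]
        simp only [List.length_append]
        have : r.length ≠ 0 := by simpa using hr
        omega
      have hlr : r.length < p.length := by
        rw [hpa]
        simp only [List.length_append]
        have : a.length ≠ 0 := by simpa using hane
        omega
      obtain ⟨L1, hl1, hgood1, hf1⟩ := ih a.length hla a rfl hda hane (by rw [hta]; exact hevm)
      obtain ⟨L2, hl2, hgood2, hf2⟩ := ih r.length hlr r rfl hdr hr (by rw [htr]; exact hev)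
      refine ⟨L1 ++ L2, ?_, ?_, ?_⟩
      · rw [List.length_append, hl1, hl2, hpa,
          egdc_append hda.1 (dyck_last hda hane) (dyck_head hdr hr)]
      · intro P hP
        rcases List.mem_append.mp hP with h1 | h2
        · exact hgood1 P h1
        · exact hgood2 P h2
      · rw [hpa, hf1, hf2, List.flatten_append]

lemma good_prefix_eq {P P' : List Step} (hP : IsDyck P) (hPne : P ≠ [])
    (hPev : Even (termDesc P)) (hP' : IsDyck P') (hodd' : OddNonterminalGroundDescents P')
    (hpre : P <+: P') : P = P' := by
  obtain ⟨t, rfl⟩ := hpre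
  cases t with
  | nil => simp
  | cons d t' =>
    exfalso
    have hd : d = U := by
      cases d
      · rfl
      · have h1 := hP'.2 (P ++ [D]) ⟨t', by simp⟩
        have hb := hP.1
        simp [List.count_append, List.count_cons] at h1
        omega
    subst hd
    obtain ⟨qq, mm, hmm, hgd⟩ : ∃ qq mm, mm = termDesc P ∧ GroundDescent P qq mm [] :=
      ⟨_, _, rfl, termDesc_spec hP hPne⟩
    obtain ⟨h1, h2, h3, h4, h5⟩ := hgd
    rw [List.append_nil] at h1
    have hgd2 : GroundDescent (P ++ U :: t') qq mm (U :: t') :=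
      ⟨by rw [h1], h2, h3, by simp, h5⟩
    have hoddm := hodd' _ _ _ hgd2 (by simp)
    rw [hmm] at hoddm
    exact (Nat.not_odd_iff_even.mpr hPev) hoddm

lemma decomp_unique : ∀ (L L' : List (List Step)),
    (∀ P ∈ L, IsDyck P ∧ P ≠ [] ∧ Even (termDesc P) ∧ OddNonterminalGroundDescents P) →
    (∀ P ∈ L', IsDyck P ∧ P ≠ [] ∧ Even (termDesc P) ∧ OddNonterminalGroundDescents P) →
    L.flatten = L'.flatten → L = L' := by
  intro L
  induction L with
  | nil =>
    intro L' _ h2 hf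
    cases L' with
    | nil => rfl
    | cons P T =>
      exfalso
      simp at hf
      exact (h2 P (by simp)).2.1 hf.1
  | cons P T ih =>
    intro L' h1 h2 hf
    cases L' with
    | nil =>
      exfalso
      simp at hf
      exact (h1 P (by simp)).2.1 hf.1
    | cons P' T' =>
      simp only [List.flatten_cons] at hf
      have c1 := h1 P (by simp)
      have c2 := h2 P' (by simp)
      have hpre : P <+: P' ∨ P' <+: P :=
        List.prefix_or_prefix_of_prefix ⟨T.flatten, hf⟩ ⟨T'.flatten, rfl⟩
      have hPP' : P = P' := by
        rcases hpre with hp1 | hp2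
        · exact good_prefix_eq c1.1 c1.2.1 c1.2.2.1 c2.1 c2.2.2.2 hp1
        · exact (good_prefix_eq c2.1 c2.2.1 c2.2.2.1 c1.1 c1.2.2.2 hp2).symm
      subst hPP'
      have hT : T.flatten = T'.flatten := List.append_cancel_left hf
      have := ih T' (fun Q hQ => h1 Q (by simp [hQ])) (fun Q hQ => h2 Q (by simp [hQ])) hT
      rw [this]

/-- For `n ≥ 1`, a Dyck `n`-path with even terminal descent (of length ≥ 2) and exactly
`k ≥ 1` even-length descents to ground level decomposes uniquely into a concatenation of
`k` nonempty Dyck paths each with even terminal descent and all other ground descents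
odd. -/
theorem stmt14 (n k : ℕ) (hn : 1 ≤ n) (hk : 1 ≤ k) (p : List Step)
    (hp : IsDyckN n p) (he : Even (termDesc p)) (h2 : 2 ≤ termDesc p)
    (hc : evenGroundDescentCount p = k) :
    ∃! L : List (List Step), L.length = k ∧
      (∀ P ∈ L, IsDyck P ∧ P ≠ [] ∧ Even (termDesc P) ∧
        OddNonterminalGroundDescents P) ∧
      p = L.flatten := by
  have hne : p ≠ [] := by
    intro h0
    rw [h0] at hp
    have := hp.2
    simp at this
    omega
  obtain ⟨L, hl, hgood, hflat⟩ := exists_decomp p.length p rfl hp.1 hne he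
  refine ⟨L, ⟨by rw [hl, hc], hgood, hflat⟩, ?_⟩
  rintro L' ⟨hl', hgood', hflat'⟩
  exact decomp_unique L' L hgood' hgood (hflat'.symm.trans hflat)
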